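/- Suppose $E(\Lambda)$ is a Riesz basis with constant $K$ for $L^2(D)$, $D \subset \mathbb{R}^2$ of measure 1, and $f = \sum_\lambda c_\lambda e^{2\pi i\langle\lambda,x\rangle}$ satisfies $\|f\|_{L^2(D)} = 1$ and $f = \frac{1}{\sqrt{\pi}\varepsilon}\mathbbm{1}_{\varepsilon\mathbb{D}}$ on $D$, with $\varepsilon\mathbb{D} + t \subset D$ for a vector $t$. Then the translated series $g(x) = \sum_\lambda c_\lambda e^{2\pi i\langle\lambda, x - t\rangle}$ satisfies $\int_{D\setminus(D+t)} |g|^2 \le K^2 - 1$. -/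

import Mathlib

open MeasureTheory Real Filter Topology

/-- The exponential `e(⟨λ,x⟩) = e^{2πi⟨λ,x⟩}` on `ℝ²`. -/
noncomputable def expFun2 (l x : EuclideanSpace ℝ (Fin 2)) : ℂ :=
  Complex.exp (2 * π * Complex.I * (inner ℝ l x : ℝ))

lemma norm_toLp_sq {α : Type*} [MeasurableSpace α] {μ : Measure α}
    (u : α → ℂ) (hu : MemLp u 2 μ) :
    ‖hu.toLp u‖ ^ 2 = ∫ x, ‖u x‖ ^ 2 ∂μ := by
  have h : (‖hu.toLp u‖ : ℝ) ^ 2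
      = RCLike.re ((inner ℂ (hu.toLp u) (hu.toLp u)) : ℂ) :=
    (inner_self_eq_norm_sq (𝕜 := ℂ) _).symm
  rw [MeasureTheory.L2.inner_def] at h
  have hint : Integrable
      (fun x => (inner ℂ ((hu.toLp u : _ → ℂ) x) ((hu.toLp u : _ → ℂ) x) : ℂ)) μ :=
    MeasureTheory.L2.integrable_inner _ _
  rw [← integral_re hint] at h
  rw [h]
  refine integral_congr_ae ?_
  filter_upwards [hu.coeFn_toLp] with x hx
  rw [hx]
  exact inner_self_eq_norm_sq (𝕜 := ℂ) _

lemma norm_toLp_sub_sq {α : Type*} [MeasurableSpace α] {μ : Measure α}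
    (u v : α → ℂ) (hu : MemLp u 2 μ) (hv : MemLp v 2 μ) :
    ‖hu.toLp u - hv.toLp v‖ ^ 2 = ∫ x, ‖u x - v x‖ ^ 2 ∂μ := by
  rw [← MemLp.toLp_sub]
  exact norm_toLp_sq _ _

lemma norm_expFun2 (l x : EuclideanSpace ℝ (Fin 2)) : ‖expFun2 l x‖ = 1 := by
  rw [expFun2, Complex.norm_exp]
  simp [Complex.mul_re]

lemma expFun2_add (l a b : EuclideanSpace ℝ (Fin 2)) :
    expFun2 l (a + b) = expFun2 l a * expFun2 l b := by
  rw [expFun2, expFun2, expFun2, ← Complex.exp_add, inner_add_right]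
  push_cast
  ring_nf

lemma continuous_expFun2 (l : EuclideanSpace ℝ (Fin 2)) : Continuous (expFun2 l) := by
  exact Complex.continuous_exp.comp
    (continuous_const.mul (Complex.continuous_ofReal.comp (continuous_const.inner continuous_id)))

lemma memℒp_partialSum {μ : Measure (EuclideanSpace ℝ (Fin 2))} [IsFiniteMeasure μ]
    {Λ : Set (EuclideanSpace ℝ (Fin 2))} (cc : Λ → ℂ) (F : Finset Λ) :
    MemLp (fun x => ∑ l ∈ F, cc l * expFun2 l.1 x) 2 μ := by
  refine memLp_finset_sum (f := fun (l : Λ) x => cc l * expFun2 l.1 x) F fun l _ => ?_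
  refine MemLp.of_bound ((continuous_const.mul (continuous_expFun2 l.1)).aestronglyMeasurable)
    ‖cc l‖ (ae_of_all _ fun x => ?_)
  rw [norm_mul, norm_expFun2, mul_one]

lemma tendsto_of_sq_tendsto {ι : Type*} {l : Filter ι} {u : ι → ℝ} (hu : ∀ i, 0 ≤ u i)
    (h : Tendsto (fun i => u i ^ 2) l (𝓝 0)) : Tendsto u l (𝓝 0) := by
  have h2 := (Real.continuous_sqrt.tendsto 0).comp h
  simp only [Real.sqrt_zero, Function.comp_def] at h2
  exact h2.congr fun i => Real.sqrt_sq (hu i)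

lemma sq_tendsto_of_tendsto {ι : Type*} {l : Filter ι} {u : ι → ℝ}
    (h : Tendsto u l (𝓝 0)) : Tendsto (fun i => u i ^ 2) l (𝓝 0) := by
  have := h.pow 2
  norm_num at this
  exact this

set_option maxHeartbeats 1000000 in
/-- If `E(Λ)` is a Riesz basis with constant `K` for `L²(D)`, `|D| = 1`, and
`f = ∑ c_λ e(⟨λ,x⟩)` is the normalised indicator of `ε𝔻` on `D` with
`ε𝔻 + t ⊆ D`, then the translated series converges in `L²(D)` to some `g` with
`∫_{D \ (D+t)} |g|² ≤ K² - 1`. -/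
theorem translated_series_outer_bound (D : Set (EuclideanSpace ℝ (Fin 2)))
    (hDm : MeasurableSet D) (hD : volume D = 1)
    (Λ : Set (EuclideanSpace ℝ (Fin 2))) (K : ℝ) (hK : 1 ≤ K)
    (hcomplete : ∀ f : EuclideanSpace ℝ (Fin 2) → ℂ,
      MemLp f 2 (volume.restrict D) →
      ∀ ε > 0, ∃ (F : Finset Λ) (c : Λ → ℂ),
        ∫ x in D, ‖f x - ∑ l ∈ F, c l * expFun2 l.1 x‖ ^ 2 < ε)
    (hbound : ∀ (F : Finset Λ) (c : Λ → ℂ),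
      (1 / K) * ∑ l ∈ F, ‖c l‖ ^ 2 ≤ ∫ x in D, ‖∑ l ∈ F, c l * expFun2 l.1 x‖ ^ 2 ∧
      ∫ x in D, ‖∑ l ∈ F, c l * expFun2 l.1 x‖ ^ 2 ≤ K * ∑ l ∈ F, ‖c l‖ ^ 2)
    (ε : ℝ) (hε : 0 < ε) (t : EuclideanSpace ℝ (Fin 2))
    (hball : Metric.closedBall (0 : EuclideanSpace ℝ (Fin 2)) ε ⊆ D)
    (hballt : ∀ x ∈ Metric.closedBall (0 : EuclideanSpace ℝ (Fin 2)) ε, x + t ∈ D)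
    (f : EuclideanSpace ℝ (Fin 2) → ℂ)
    (hf1 : ∫ x in D, ‖f x‖ ^ 2 = 1)
    (hfD : ∀ x ∈ D, f x =
      Set.indicator (Metric.closedBall (0 : EuclideanSpace ℝ (Fin 2)) ε)
        (fun _ => (1 / (Real.sqrt π * ε) : ℂ)) x)
    (c : Λ → ℂ)
    (hexp : Tendsto (fun F : Finset Λ =>
        ∫ x in D, ‖f x - ∑ l ∈ F, c l * expFun2 l.1 x‖ ^ 2) atTop (𝓝 0)) :
    ∃ g : EuclideanSpace ℝ (Fin 2) → ℂ,
      Tendsto (fun F : Finset Λ =>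
          ∫ x in D, ‖g x - ∑ l ∈ F, c l * expFun2 l.1 (x - t)‖ ^ 2) atTop (𝓝 0) ∧
      ∫ x in D \ ((fun y => y + t) '' D), ‖g x‖ ^ 2 ≤ K ^ 2 - 1 := by
  classical
  have hKpos : (0 : ℝ) < K := lt_of_lt_of_le one_pos hK
  haveI hfin : IsFiniteMeasure (volume.restrict D) := by
    constructor
    rw [Measure.restrict_apply_univ, hD]
    exact ENNReal.one_lt_top
  -- translated coefficients
  set c' : Λ → ℂ := fun l => c l * expFun2 l.1 (-t) with hc'def
  have hc'norm : ∀ l : Λ, ‖c' l‖ = ‖c l‖ := fun l => by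
    simp only [hc'def, norm_mul, norm_expFun2, mul_one]
  set a : Λ → ℝ := fun l => ‖c l‖ ^ 2 with hadef
  have ha0 : ∀ l, 0 ≤ a l := fun l => sq_nonneg _
  have hQt : ∀ (F : Finset Λ) (x : EuclideanSpace ℝ (Fin 2)),
      (∑ l ∈ F, c' l * expFun2 l.1 x) = ∑ l ∈ F, c l * expFun2 l.1 (x - t) := by
    intro F x
    refine Finset.sum_congr rfl fun l _ => ?_
    have h1 : expFun2 l.1 (x - t) = expFun2 l.1 (-t) * expFun2 l.1 x := by
      rw [← expFun2_add]
      norm_num [sub_eq_neg_add]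
    rw [hc'def, h1]; ring
  -- MemLp of f
  have hfmem : MemLp f 2 (volume.restrict D) := by
    have hind : MemLp (Set.indicator (Metric.closedBall (0 : EuclideanSpace ℝ (Fin 2)) ε)
        (fun _ => (1 / (Real.sqrt π * ε) : ℂ))) 2 (volume.restrict D) :=
      memLp_indicator_const 2 measurableSet_closedBall _ (Or.inr (measure_ne_top _ _))
    refine hind.ae_eq ?_
    filter_upwards [ae_restrict_mem hDm] with x hx
    exact (hfD x hx).symm
  -- Lp elements of partial sums
  have hnormP : ∀ F : Finset Λ, ‖(memℒp_partialSum (μ := volume.restrict D) c F).toLp _‖ ^ 2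
      = ∫ x in D, ‖∑ l ∈ F, c l * expFun2 l.1 x‖ ^ 2 :=
    fun F => norm_toLp_sq _ _
  have hnormQ : ∀ F : Finset Λ, ‖(memℒp_partialSum (μ := volume.restrict D) c' F).toLp _‖ ^ 2
      = ∫ x in D, ‖∑ l ∈ F, c' l * expFun2 l.1 x‖ ^ 2 :=
    fun F => norm_toLp_sq _ _
  -- convergence of P to f in Lp
  have htendP : Tendsto (fun F : Finset Λ => (memℒp_partialSum (μ := volume.restrict D) c F).toLp _)
      atTop (𝓝 (hfmem.toLp f)) := by
    rw [tendsto_iff_norm_sub_tendsto_zero]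
    refine tendsto_of_sq_tendsto (fun F => norm_nonneg _) ?_
    have heq : ∀ F : Finset Λ,
        ‖(memℒp_partialSum (μ := volume.restrict D) c F).toLp _ - hfmem.toLp f‖ ^ 2
          = ∫ x in D, ‖f x - ∑ l ∈ F, c l * expFun2 l.1 x‖ ^ 2 := by
      intro F
      rw [← norm_neg, neg_sub, norm_toLp_sub_sq]
    exact hexp.congr fun F => (heq F).symm
  -- summability of a
  have hsum : Summable a := by
    obtain ⟨F₀, hF₀⟩ := (Metric.tendsto_atTop.1 htendP) 1 one_pos
    refine summable_of_sum_le ha0 (c := K * (‖hfmem.toLp f‖ + 1) ^ 2) fun u => ?_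
    have h1 : ∑ l ∈ u, a l ≤ ∑ l ∈ u ∪ F₀, a l :=
      Finset.sum_le_sum_of_subset_of_nonneg Finset.subset_union_left (fun i _ _ => ha0 i)
    have h2 := (hbound (u ∪ F₀) c).1
    rw [← hnormP (u ∪ F₀)] at h2
    have h2' : ∑ l ∈ u ∪ F₀, a l
        ≤ K * ‖(memℒp_partialSum (μ := volume.restrict D) c (u ∪ F₀)).toLp _‖ ^ 2 := by
      have := mul_le_mul_of_nonneg_left h2 hKpos.le
      rw [← mul_assoc, mul_one_div_cancel hKpos.ne', one_mul] at this
      simpa only [hadef] using this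
    have h3 : ‖(memℒp_partialSum (μ := volume.restrict D) c (u ∪ F₀)).toLp _‖
        ≤ ‖hfmem.toLp f‖ + 1 := by
      have hd := hF₀ (u ∪ F₀) (Finset.subset_union_right)
      rw [dist_eq_norm] at hd
      have := norm_sub_norm_le ((memℒp_partialSum (μ := volume.restrict D) c (u ∪ F₀)).toLp _)
        (hfmem.toLp f)
      linarith
    calc ∑ l ∈ u, a l ≤ ∑ l ∈ u ∪ F₀, a l := h1
      _ ≤ K * ‖(memℒp_partialSum (μ := volume.restrict D) c (u ∪ F₀)).toLp _‖ ^ 2 := h2'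
      _ ≤ K * (‖hfmem.toLp f‖ + 1) ^ 2 := by
          refine mul_le_mul_of_nonneg_left ?_ hKpos.le
          exact pow_le_pow_left₀ (norm_nonneg _) h3 2
  have hsumT := hsum.hasSum
  -- tsum a ≤ K
  have hTK : ∑' l, a l ≤ K := by
    have hL1 : Tendsto (fun F : Finset Λ => (1 / K) * ∑ l ∈ F, a l) atTop
        (𝓝 ((1 / K) * ∑' l, a l)) := (hsumT : Tendsto _ _ _).const_mul (1 / K)
    have hL2 : Tendsto (fun F : Finset Λ =>
        ‖(memℒp_partialSum (μ := volume.restrict D) c F).toLp _‖ ^ 2) atTop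
        (𝓝 (‖hfmem.toLp f‖ ^ 2)) := htendP.norm.pow 2
    have key : (1 / K) * ∑' l, a l ≤ ‖hfmem.toLp f‖ ^ 2 := by
      refine le_of_tendsto_of_tendsto' hL1 hL2 fun F => ?_
      rw [hnormP]
      simpa only [hadef] using (hbound F c).1
    have hfLnorm : ‖hfmem.toLp f‖ ^ 2 = 1 := by rw [norm_toLp_sq]; exact hf1
    rw [hfLnorm] at key
    have := mul_le_mul_of_nonneg_left key hKpos.le
    rw [← mul_assoc, mul_one_div_cancel hKpos.ne', one_mul, mul_one] at this
    exact this
  -- difference bound for translated sums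
  have hdiff : ∀ F F' : Finset Λ, F ⊆ F' →
      ‖(memℒp_partialSum (μ := volume.restrict D) c' F').toLp _
        - (memℒp_partialSum (μ := volume.restrict D) c' F).toLp _‖ ^ 2
        ≤ K * ∑ l ∈ F' \ F, a l := by
    intro F F' hsub
    rw [norm_toLp_sub_sq]
    have heq : ∫ x in D, ‖(∑ l ∈ F', c' l * expFun2 l.1 x) - ∑ l ∈ F, c' l * expFun2 l.1 x‖ ^ 2
        = ∫ x in D, ‖∑ l ∈ F' \ F, c' l * expFun2 l.1 x‖ ^ 2 := by
      refine integral_congr_ae (ae_of_all _ fun x => ?_)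
      simp only [Finset.sum_sdiff_eq_sub hsub]
    rw [heq]
    calc ∫ x in D, ‖∑ l ∈ F' \ F, c' l * expFun2 l.1 x‖ ^ 2
        ≤ K * ∑ l ∈ F' \ F, ‖c' l‖ ^ 2 := (hbound (F' \ F) c').2
      _ = K * ∑ l ∈ F' \ F, a l := by simp only [hc'norm, hadef]
  -- Cauchy and limit
  have hcauchy : CauchySeq (fun F : Finset Λ =>
      (memℒp_partialSum (μ := volume.restrict D) c' F).toLp _) := by
    rw [Metric.cauchySeq_iff']
    intro δ hδ
    obtain ⟨s, hs⟩ := summable_iff_vanishing_norm.1 hsum (δ ^ 2 / K) (by positivity)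
    refine ⟨s, fun F hF => ?_⟩
    have hsub : s ⊆ F := hF
    have h1 := hdiff s F hsub
    have h2 : ∑ l ∈ F \ s, a l < δ ^ 2 / K := by
      have := hs (F \ s) (Finset.sdiff_disjoint)
      rwa [Real.norm_eq_abs, abs_of_nonneg (Finset.sum_nonneg fun i _ => ha0 i)] at this
    rw [dist_eq_norm]
    have h3 : ‖(memℒp_partialSum (μ := volume.restrict D) c' F).toLp _
        - (memℒp_partialSum (μ := volume.restrict D) c' s).toLp _‖ ^ 2 < δ ^ 2 := by
      refine lt_of_le_of_lt h1 ?_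
      rw [mul_comm]
      exact (lt_div_iff₀ hKpos).1 h2
    exact lt_of_pow_lt_pow_left₀ 2 hδ.le h3
  obtain ⟨G, hG⟩ := cauchySeq_tendsto_of_complete hcauchy
  refine ⟨(G : EuclideanSpace ℝ (Fin 2) → ℂ), ?_, ?_⟩
  · -- first goal: convergence of translated series to g
    have hGnorm : ∀ F : Finset Λ,
        ∫ x in D, ‖(G : EuclideanSpace ℝ (Fin 2) → ℂ) x - ∑ l ∈ F, c l * expFun2 l.1 (x - t)‖ ^ 2
          = ‖G - (memℒp_partialSum (μ := volume.restrict D) c' F).toLp _‖ ^ 2 := by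
      intro F
      have h1 : ∫ x in D,
          ‖(G : EuclideanSpace ℝ (Fin 2) → ℂ) x - ∑ l ∈ F, c l * expFun2 l.1 (x - t)‖ ^ 2
          = ∫ x in D,
            ‖(G : EuclideanSpace ℝ (Fin 2) → ℂ) x - ∑ l ∈ F, c' l * expFun2 l.1 x‖ ^ 2 := by
        refine integral_congr_ae (ae_of_all _ fun x => ?_)
        simp only [hQt]
      rw [h1, ← norm_toLp_sub_sq _ _ (Lp.memLp G) (memℒp_partialSum c' F), Lp.toLp_coeFn]
    have hd : Tendsto (fun F : Finset Λ =>
        ‖G - (memℒp_partialSum (μ := volume.restrict D) c' F).toLp _‖) atTop (𝓝 0) := by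
      have h2 := tendsto_iff_norm_sub_tendsto_zero.1 hG
      exact h2.congr fun F => norm_sub_rev _ _
    exact (sq_tendsto_of_tendsto hd).congr fun F => (hGnorm F).symm
  · -- second goal: the bound
    set S : Set (EuclideanSpace ℝ (Fin 2)) := (fun y => y + t) '' Metric.closedBall 0 ε with hSdef
    have hemb : MeasurableEmbedding (fun y : EuclideanSpace ℝ (Fin 2) => y + t) :=
      (MeasurableEquiv.addRight t).measurableEmbedding
    have hmp : MeasurePreserving (fun y : EuclideanSpace ℝ (Fin 2) => y + t) volume volume :=
      measurePreserving_add_right volume t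
    have cov : ∀ w : EuclideanSpace ℝ (Fin 2) → ℝ,
        ∫ x in S, w x = ∫ x in Metric.closedBall (0 : EuclideanSpace ℝ (Fin 2)) ε, w (x + t) :=
      fun w => hmp.setIntegral_image_emb hemb w _
    have hSm : MeasurableSet S := hemb.measurableSet_image.2 measurableSet_closedBall
    have hSD : S ⊆ D := by rintro x ⟨y, hy, rfl⟩; exact hballt y hy
    have hSD' : S ⊆ (fun y => y + t) '' D := Set.image_mono hball
    have hres : volume.restrict S ≤ volume.restrict D := Measure.restrict_mono hSD le_rfl
    haveI : IsFiniteMeasure (volume.restrict S) := by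
      constructor
      rw [Measure.restrict_apply_univ]
      exact lt_of_le_of_lt (measure_mono hSD) (by rw [hD]; exact ENNReal.one_lt_top)
    have hgS : MemLp (⇑G) 2 (volume.restrict S) := (Lp.memLp G).mono_measure hres
    have hQS : ∀ F : Finset Λ,
        MemLp (fun x => ∑ l ∈ F, c' l * expFun2 l.1 x) 2 (volume.restrict S) :=
      fun F => (memℒp_partialSum c' F).mono_measure hres
    have hconst : ∀ x ∈ S, f (x - t) = (1 / (Real.sqrt π * ε) : ℂ) := by
      rintro x ⟨y, hy, rfl⟩
      rw [add_sub_cancel_right, hfD y (hball hy), Set.indicator_of_mem hy]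
    have hhS : MemLp (fun x => f (x - t)) 2 (volume.restrict S) := by
      refine (memLp_const (1 / (Real.sqrt π * ε) : ℂ)).ae_eq ?_
      filter_upwards [ae_restrict_mem hSm] with x hx
      exact (hconst x hx).symm
    have hgint : IntegrableOn (fun x => ‖(G : EuclideanSpace ℝ (Fin 2) → ℂ) x‖ ^ 2) D volume :=
      (Lp.memLp G).norm.integrable_sq
    -- gS is L2-limit of Q on S
    have hn1 : Tendsto (fun F : Finset Λ => ‖hgS.toLp _ - (hQS F).toLp _‖) atTop (𝓝 0) := by
      have hb : ∀ F : Finset Λ, ‖hgS.toLp _ - (hQS F).toLp _‖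
          ≤ ‖G - (memℒp_partialSum (μ := volume.restrict D) c' F).toLp _‖ := by
        intro F
        refine le_of_pow_le_pow_left₀ two_ne_zero (norm_nonneg _) ?_
        rw [norm_toLp_sub_sq]
        have h2 : ‖G - (memℒp_partialSum (μ := volume.restrict D) c' F).toLp _‖ ^ 2
            = ∫ x in D,
              ‖(G : EuclideanSpace ℝ (Fin 2) → ℂ) x - ∑ l ∈ F, c' l * expFun2 l.1 x‖ ^ 2 := by
          rw [← norm_toLp_sub_sq _ _ (Lp.memLp G) (memℒp_partialSum c' F), Lp.toLp_coeFn]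
        rw [h2]
        refine setIntegral_mono_set
          (((Lp.memLp G).sub (memℒp_partialSum c' F)).norm.integrable_sq)
          (ae_of_all _ fun x => sq_nonneg _) (HasSubset.Subset.eventuallyLE hSD)
      refine squeeze_zero (fun F => norm_nonneg _) hb ?_
      exact (tendsto_iff_norm_sub_tendsto_zero.1 hG).congr fun F => norm_sub_rev _ _
    -- hS (translated f) is L2-limit of Q on S
    have hn2 : Tendsto (fun F : Finset Λ => ‖hhS.toLp _ - (hQS F).toLp _‖) atTop (𝓝 0) := by
      have hb : ∀ F : Finset Λ, ‖hhS.toLp _ - (hQS F).toLp _‖ ^ 2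
          ≤ ∫ x in D, ‖f x - ∑ l ∈ F, c l * expFun2 l.1 x‖ ^ 2 := by
        intro F
        rw [norm_toLp_sub_sq]
        have hcov := cov (fun x => ‖f (x - t) - ∑ l ∈ F, c' l * expFun2 l.1 x‖ ^ 2)
        rw [hcov]
        have hcong : ∫ x in Metric.closedBall (0 : EuclideanSpace ℝ (Fin 2)) ε,
            ‖f (x + t - t) - ∑ l ∈ F, c' l * expFun2 l.1 (x + t)‖ ^ 2
            = ∫ x in Metric.closedBall (0 : EuclideanSpace ℝ (Fin 2)) ε,
            ‖f x - ∑ l ∈ F, c l * expFun2 l.1 x‖ ^ 2 := by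
          refine integral_congr_ae (ae_of_all _ fun x => ?_)
          simp only [hQt, add_sub_cancel_right]
        rw [hcong]
        refine setIntegral_mono_set ((hfmem.sub (memℒp_partialSum c F)).norm.integrable_sq)
          (ae_of_all _ fun x => sq_nonneg _) (HasSubset.Subset.eventuallyLE hball)
      have hsq : Tendsto (fun F : Finset Λ => ‖hhS.toLp _ - (hQS F).toLp _‖ ^ 2) atTop (𝓝 0) :=
        squeeze_zero (fun F => sq_nonneg _) hb hexp
      exact tendsto_of_sq_tendsto (fun F => norm_nonneg _) hsq
    -- hence gS = hS in L2(S)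
    have hgh : hgS.toLp _ = hhS.toLp _ := by
      have hnn : ‖hgS.toLp _ - hhS.toLp _‖ ≤ 0 := by
        have hsum3 : Tendsto (fun F : Finset Λ => ‖hgS.toLp _ - (hQS F).toLp _‖
            + ‖hhS.toLp _ - (hQS F).toLp _‖) atTop (𝓝 0) := by
          simpa using hn1.add hn2
        refine le_of_tendsto_of_tendsto' tendsto_const_nhds hsum3 fun F => ?_
        have htri := dist_triangle (hgS.toLp _) ((hQS F).toLp _) (hhS.toLp _)
        rw [dist_eq_norm, dist_eq_norm, dist_eq_norm, norm_sub_rev ((hQS F).toLp _)] at htri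
        exact htri
      have h0 := le_antisymm hnn (norm_nonneg _)
      rwa [norm_eq_zero, sub_eq_zero] at h0
    -- the integral of |g|^2 over S equals 1
    have hSint : ∫ x in S, ‖(G : EuclideanSpace ℝ (Fin 2) → ℂ) x‖ ^ 2 = 1 := by
      have e1 : ∫ x in S, ‖(G : EuclideanSpace ℝ (Fin 2) → ℂ) x‖ ^ 2 = ‖hgS.toLp _‖ ^ 2 :=
        (norm_toLp_sq _ hgS).symm
      have e2 : ‖hhS.toLp _‖ ^ 2 = ∫ x in S, ‖f (x - t)‖ ^ 2 := norm_toLp_sq _ hhS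
      have e3 : ∫ x in S, ‖f (x - t)‖ ^ 2
          = ∫ x in Metric.closedBall (0 : EuclideanSpace ℝ (Fin 2)) ε, ‖f x‖ ^ 2 := by
        rw [cov (fun x => ‖f (x - t)‖ ^ 2)]
        refine integral_congr_ae (ae_of_all _ fun x => ?_)
        simp only [add_sub_cancel_right]
      have e4 : ∫ x in Metric.closedBall (0 : EuclideanSpace ℝ (Fin 2)) ε, ‖f x‖ ^ 2 = 1 := by
        have hfint : IntegrableOn (fun x => ‖f x‖ ^ 2) D volume := hfmem.norm.integrable_sq
        have hzero : ∫ x in D \ Metric.closedBall (0 : EuclideanSpace ℝ (Fin 2)) ε,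
            ‖f x‖ ^ 2 = 0 := by
          have hae : ∀ᵐ x ∂(volume.restrict
              (D \ Metric.closedBall (0 : EuclideanSpace ℝ (Fin 2)) ε)),
              ‖f x‖ ^ 2 = (0 : ℝ) := by
            filter_upwards [ae_restrict_mem (hDm.diff measurableSet_closedBall)] with x hx
            rw [hfD x hx.1, Set.indicator_of_notMem hx.2]
            simp
          calc ∫ x in D \ Metric.closedBall (0 : EuclideanSpace ℝ (Fin 2)) ε, ‖f x‖ ^ 2
              = ∫ _ in D \ Metric.closedBall (0 : EuclideanSpace ℝ (Fin 2)) ε, (0 : ℝ) :=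
                integral_congr_ae hae
            _ = 0 := integral_zero _ _
        have hunion : ∫ x in D, ‖f x‖ ^ 2
            = (∫ x in Metric.closedBall (0 : EuclideanSpace ℝ (Fin 2)) ε, ‖f x‖ ^ 2)
              + ∫ x in D \ Metric.closedBall (0 : EuclideanSpace ℝ (Fin 2)) ε, ‖f x‖ ^ 2 := by
          rw [← setIntegral_union disjoint_sdiff_self_right
            (hDm.diff measurableSet_closedBall) (hfint.mono_set hball)
            (hfint.mono_set Set.diff_subset), Set.union_diff_cancel hball]
        rw [hf1, hzero] at hunion
        linarith
      rw [e1, hgh, e2, e3, e4]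
    -- final assembly
    have hdisj : Disjoint (D \ ((fun y => y + t) '' D)) S :=
      Set.disjoint_sdiff_left.mono_right hSD'
    have hunion2 : ∫ x in (D \ ((fun y => y + t) '' D)) ∪ S,
        ‖(G : EuclideanSpace ℝ (Fin 2) → ℂ) x‖ ^ 2
        = (∫ x in D \ ((fun y => y + t) '' D), ‖(G : EuclideanSpace ℝ (Fin 2) → ℂ) x‖ ^ 2)
          + ∫ x in S, ‖(G : EuclideanSpace ℝ (Fin 2) → ℂ) x‖ ^ 2 :=
      setIntegral_union hdisj hSm (hgint.mono_set Set.diff_subset) (hgint.mono_set hSD)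
    have hle2 : ∫ x in (D \ ((fun y => y + t) '' D)) ∪ S,
        ‖(G : EuclideanSpace ℝ (Fin 2) → ℂ) x‖ ^ 2
        ≤ ∫ x in D, ‖(G : EuclideanSpace ℝ (Fin 2) → ℂ) x‖ ^ 2 :=
      setIntegral_mono_set hgint (ae_of_all _ fun x => sq_nonneg _)
        (HasSubset.Subset.eventuallyLE (Set.union_subset Set.diff_subset hSD))
    have hDb : ∫ x in D, ‖(G : EuclideanSpace ℝ (Fin 2) → ℂ) x‖ ^ 2 ≤ K ^ 2 := by
      have e5 : ∫ x in D, ‖(G : EuclideanSpace ℝ (Fin 2) → ℂ) x‖ ^ 2 = ‖G‖ ^ 2 := by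
        rw [← norm_toLp_sq _ (Lp.memLp G), Lp.toLp_coeFn]
      rw [e5]
      have hQb : ∀ F : Finset Λ,
          ‖(memℒp_partialSum (μ := volume.restrict D) c' F).toLp _‖ ^ 2 ≤ K ^ 2 := by
        intro F
        rw [hnormQ F]
        calc ∫ x in D, ‖∑ l ∈ F, c' l * expFun2 l.1 x‖ ^ 2
            ≤ K * ∑ l ∈ F, ‖c' l‖ ^ 2 := (hbound F c').2
          _ = K * ∑ l ∈ F, a l := by simp only [hc'norm, hadef]
          _ ≤ K * ∑' l, a l :=
              mul_le_mul_of_nonneg_left (Summable.sum_le_tsum F (fun i _ => ha0 i) hsum) hKpos.le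
          _ ≤ K * K := mul_le_mul_of_nonneg_left hTK hKpos.le
          _ = K ^ 2 := (sq K).symm
      exact le_of_tendsto' (hG.norm.pow 2) hQb
    linarith [hSint, hunion2, hle2, hDb]
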